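/- Let f(x,u) = A_gt z(x,u) for some A_gt ∈ ℝ^{n×ℓ}, with data satisfying the cumulatively bounded noise assumption: x̃_i^+ = A_gt z(x̃_i, ũ_i) + d̃_i with D̃ = [d̃_1 ⋯ d̃_D] satisfying [D̃^T; I_n]^T [[Δ_1, Δ_2],[Δ_2^T, Δ_3]] [D̃^T; I_n] ≺ 0 and Δ_1 ⪰ 0, and assume the matrix [[−Δ̃_1, Δ̃_2],[Δ̃_2^T, −Δ̃_3]] is invertible with inverse [[Δ̄_1, Δ̄_2],[Δ̄_2^T, Δ̄_3]]. Suppose the constraint polynomials have the quadratic form p_j(x,u) = [z(x,u);1]^T P_j [z(x,u);1] with P_j ∈ ℝ^{(ℓ+1)×(ℓ+1)} (j = 1,…,c), and there exist T_x ∈ ℝ^{n×ℓ} and T ∈ ℝ^{(n+m)×ℓ} with x = T_x z(x,u) and [x;u] = T z(x,u) for all (x,u) ∈ ℝ^n × ℝ^m. Let Q ∈ ℝ^{n×n}, S ∈ ℝ^{n×m}, R ∈ ℝ^{m×m} with Q, R symmetric. Suppose there exist a positive semidefinite P ∈ ℝ^{n×n}, a scalar τ ≥ 0, and for each j a row vector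 of monomials z_j ∈ ℝ[x,u]^{1×β} and coefficients τ_j ∈ ℝ^{β} with z_j τ_j an SOS polynomial in (x,u) and a matrix P̃_j(τ_j) ∈ ℝ^{(ℓ+1)×(ℓ+1)} satisfying z_j(x,u)τ_j · [z(x,u);1]^T P_j [z(x,u);1] = [z(x,u);1]^T P̃_j(τ_j) [z(x,u);1] for all (x,u), such that the symmetric matrix Θ ∈ ℝ^{(n+ℓ+1)×(n+ℓ+1)} defined by the quadratic form [v_1; v_2; v_3]^T Θ [v_1; v_2; v_3] = −v_1^T P v_1 + v_2^T T_x^T P T_x v_2 + (T v_2)^T [[Q, S],[S^T, R]] (T v_2) + τ [v_2; v_1]^T [[Δ̄_1, Δ̄_2],[Δ̄_2^T, Δ̄_3]] [v_2; v_1] + [v_2; v_3]^T (Σ_{j=1}^{c} P̃_j(τ_j)) [v_2; v_3] for all v_1 ∈ ℝ^n, v_2 ∈ ℝ^ℓ, v_3 ∈ ℝ, is positive semidefinite. Then for all (x,u) with p_j(x,u) ≤ 0 for j = 1,…,c: f(x,u)^T P f(x,u) − x^T P x ≤ [x;u]^T [[Q, S],[S^T, R]] [x;u]; i.e., the system is (Q,S,R)-dissipative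 on the constraint set with storage function λ(x) = x^T P x. -/

import Mathlib

open Matrix

/-- A polynomial is SOS if it is a finite sum of squares of real polynomials. -/
def IsSOSPoly {σ : Type*} (p : MvPolynomial σ ℝ) : Prop :=
  ∃ (k : ℕ) (q : Fin k → MvPolynomial σ ℝ), p = ∑ j, (q j) ^ 2

/-- `M ≺ 0`: `M` is (symmetric) negative definite. -/
def IsNegDef {ι : Type*} [Fintype ι] (M : Matrix ι ι ℝ) : Prop :=
  (-M).PosDef

private lemma dotmv {a b : Type*} [Fintype a] [Fintype b] (A : Matrix a b ℝ) (v : a → ℝ)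
    (w : b → ℝ) : v ⬝ᵥ A *ᵥ w = (Aᵀ *ᵥ v) ⬝ᵥ w := by
  rw [Matrix.dotProduct_mulVec, Matrix.mulVec_transpose]

private lemma sum_mulVec' {ι κ : Type*} [Fintype ι] [Fintype κ]
    (M : κ → Matrix ι ι ℝ) (v : ι → ℝ) :
    (∑ j, M j) *ᵥ v = ∑ j, (M j) *ᵥ v := by
  ext i
  simp [Matrix.mulVec, dotProduct, Finset.sum_apply, Matrix.sum_apply, Finset.sum_mul]
  rw [Finset.sum_comm]

private lemma dot_sum' {ι κ : Type*} [Fintype ι] [Fintype κ]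
    (v : ι → ℝ) (w : κ → ι → ℝ) : v ⬝ᵥ ∑ j, w j = ∑ j, v ⬝ᵥ w j := by
  simp [dotProduct, Finset.sum_apply, Finset.mul_sum]
  rw [Finset.sum_comm]

/-- Theorem 2: data-driven `(Q,S,R)`-dissipativity verification for cumulatively bounded
noise. Under the cumulative noise assumption, invertibility of
`[[−Δ̃₁, Δ̃₂],[Δ̃₂ᵀ, −Δ̃₃]]` with inverse `[[Δ̄₁, Δ̄₂],[Δ̄₂ᵀ, Δ̄₃]]`, quadratic
constraints `pⱼ(x,u) = [z;1]ᵀ Pⱼ [z;1]`, and `x = Tₓ z`, `[x;u] = T z`, feasibility of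
the LMI (1) (`Θ ⪰ 0`) with a PSD `P`, `τ ≥ 0` and SOS multipliers `zⱼτⱼ` implies that
the system `f(x,u) = A_gt z(x,u)` is `(Q,S,R)`-dissipative on the constraint set with
storage function `λ(x) = xᵀ P x`. -/
theorem stmt7 {n m ℓ D c β : ℕ}
    (z : Fin ℓ → MvPolynomial (Fin (n + m)) ℝ)
    (xp xd : Fin D → Fin n → ℝ) (ud : Fin D → Fin m → ℝ)
    (Δ1 : Matrix (Fin D) (Fin D) ℝ) (Δ2 : Matrix (Fin D) (Fin n) ℝ)
    (Δ3 : Matrix (Fin n) (Fin n) ℝ)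
    (hΔ1 : Δ1.PosSemidef)
    -- the evaluated monomial vector `z(x,u)` and the data matrices `X̃⁺`, `Z̃`
    (zval : (Fin n → ℝ) → (Fin m → ℝ) → Fin ℓ → ℝ)
    (hzval : ∀ x u j, zval x u j = MvPolynomial.eval (Fin.append x u) (z j))
    (Xp : Matrix (Fin n) (Fin D) ℝ) (hXp : ∀ k i, Xp k i = xp i k)
    (Zt : Matrix (Fin ℓ) (Fin D) ℝ) (hZt : ∀ j i, Zt j i = zval (xd i) (ud i) j)
    -- the data-dependent matrices `Δ̃₁`, `Δ̃₂`, `Δ̃₃`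
    (Δt1 : Matrix (Fin ℓ) (Fin ℓ) ℝ) (hΔt1 : Δt1 = Zt * Δ1 * Ztᵀ)
    (Δt2 : Matrix (Fin ℓ) (Fin n) ℝ) (hΔt2 : Δt2 = -(Zt * (Δ1 * Xpᵀ + Δ2)))
    (Δt3 : Matrix (Fin n) (Fin n) ℝ)
    (hΔt3 : Δt3 = (Matrix.fromRows Xpᵀ (1 : Matrix (Fin n) (Fin n) ℝ))ᵀ *
        Matrix.fromBlocks Δ1 Δ2 Δ2ᵀ Δ3 *
        Matrix.fromRows Xpᵀ (1 : Matrix (Fin n) (Fin n) ℝ))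
    -- ground-truth system and cumulatively bounded noise
    (Agt : Matrix (Fin n) (Fin ℓ) ℝ) (Dm : Matrix (Fin n) (Fin D) ℝ)
    (hnoise : IsNegDef ((Matrix.fromRows Dmᵀ (1 : Matrix (Fin n) (Fin n) ℝ))ᵀ *
        Matrix.fromBlocks Δ1 Δ2 Δ2ᵀ Δ3 *
        Matrix.fromRows Dmᵀ (1 : Matrix (Fin n) (Fin n) ℝ)))
    (hdata : ∀ i, xp i = Agt.mulVec (zval (xd i) (ud i)) + fun k => Dm k i)
    (f : (Fin n → ℝ) → (Fin m → ℝ) → (Fin n → ℝ))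
    (hf : ∀ x u, f x u = Agt.mulVec (zval x u))
    -- the inverse `[[Δ̄₁, Δ̄₂],[Δ̄₂ᵀ, Δ̄₃]]`
    (Δb1 : Matrix (Fin ℓ) (Fin ℓ) ℝ) (Δb2 : Matrix (Fin ℓ) (Fin n) ℝ)
    (Δb3 : Matrix (Fin n) (Fin n) ℝ)
    (hinv : Matrix.fromBlocks (-Δt1) Δt2 Δt2ᵀ (-Δt3) *
          Matrix.fromBlocks Δb1 Δb2 Δb2ᵀ Δb3 = 1 ∧
        Matrix.fromBlocks Δb1 Δb2 Δb2ᵀ Δb3 *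
          Matrix.fromBlocks (-Δt1) Δt2 Δt2ᵀ (-Δt3) = 1)
    -- quadratic state-input constraints `pⱼ(x,u) = [z(x,u);1]ᵀ Pⱼ [z(x,u);1]`
    (Pc : Fin c → Matrix (Fin ℓ ⊕ Unit) (Fin ℓ ⊕ Unit) ℝ)
    -- `x = Tₓ z(x,u)` and `[x;u] = T z(x,u)`
    (Tx : Matrix (Fin n) (Fin ℓ) ℝ) (hTx : ∀ x u, x = Tx.mulVec (zval x u))
    (T : Matrix (Fin n ⊕ Fin m) (Fin ℓ) ℝ)
    (hT : ∀ x u, Sum.elim x u = T.mulVec (zval x u))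
    -- the supply rate matrices
    (Q : Matrix (Fin n) (Fin n) ℝ) (S : Matrix (Fin n) (Fin m) ℝ)
    (R : Matrix (Fin m) (Fin m) ℝ) (hQ : Q.IsSymm) (hR : R.IsSymm)
    -- storage function matrix, multiplier `τ`, and SOS multipliers `zⱼτⱼ`
    (P : Matrix (Fin n) (Fin n) ℝ) (hP : P.PosSemidef)
    (τ : ℝ) (hτ : 0 ≤ τ)
    (zrow : Fin c → Fin β → MvPolynomial (Fin (n + m)) ℝ)
    (hmono : ∀ j b, ∃ α : Fin (n + m) →₀ ℕ, zrow j b = MvPolynomial.monomial α 1)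
    (τc : Fin c → Fin β → ℝ)
    (hsos : ∀ j, IsSOSPoly (∑ b, MvPolynomial.C (τc j b) * zrow j b))
    -- the matrices `P̃ⱼ(τⱼ)` realizing the quadratic decomposition (3)
    (Pt : Fin c → Matrix (Fin ℓ ⊕ Unit) (Fin ℓ ⊕ Unit) ℝ)
    (hPt : ∀ j (x : Fin n → ℝ) (u : Fin m → ℝ),
      (∑ b, MvPolynomial.eval (Fin.append x u) (zrow j b) * τc j b) *
          (Sum.elim (zval x u) (fun _ => (1 : ℝ)) ⬝ᵥ
            (Pc j).mulVec (Sum.elim (zval x u) fun _ => (1 : ℝ))) =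
        Sum.elim (zval x u) (fun _ => (1 : ℝ)) ⬝ᵥ
          (Pt j).mulVec (Sum.elim (zval x u) fun _ => (1 : ℝ)))
    -- the matrix `Θ` of LMI (1), defined through its quadratic form, is PSD
    (Θ : Matrix (Fin n ⊕ (Fin ℓ ⊕ Unit)) (Fin n ⊕ (Fin ℓ ⊕ Unit)) ℝ)
    (hΘform : ∀ (v1 : Fin n → ℝ) (v2 : Fin ℓ → ℝ) (v3 : ℝ),
      Sum.elim v1 (Sum.elim v2 fun _ => v3) ⬝ᵥ
          Θ.mulVec (Sum.elim v1 (Sum.elim v2 fun _ => v3)) =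
        -(v1 ⬝ᵥ P.mulVec v1)
        + Tx.mulVec v2 ⬝ᵥ P.mulVec (Tx.mulVec v2)
        + T.mulVec v2 ⬝ᵥ (Matrix.fromBlocks Q S Sᵀ R).mulVec (T.mulVec v2)
        + τ * (Sum.elim v2 v1 ⬝ᵥ
            (Matrix.fromBlocks Δb1 Δb2 Δb2ᵀ Δb3).mulVec (Sum.elim v2 v1))
        + Sum.elim v2 (fun _ => v3) ⬝ᵥ
            (∑ j, Pt j).mulVec (Sum.elim v2 fun _ => v3))
    (hΘ : Θ.PosSemidef) :
    -- the system is (Q,S,R)-dissipative on the constraint set with storage `λ(x)=xᵀPx`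
    ∀ (x : Fin n → ℝ) (u : Fin m → ℝ),
      (∀ j, Sum.elim (zval x u) (fun _ => (1 : ℝ)) ⬝ᵥ
          (Pc j).mulVec (Sum.elim (zval x u) fun _ => (1 : ℝ)) ≤ 0) →
      f x u ⬝ᵥ P.mulVec (f x u) - x ⬝ᵥ P.mulVec x ≤
        Sum.elim x u ⬝ᵥ (Matrix.fromBlocks Q S Sᵀ R).mulVec (Sum.elim x u) := by
  obtain ⟨hNinv, -⟩ := hinv
  intro x u hp
  have hΔ1s : Δ1ᵀ = Δ1 := by
    have h := hΔ1.1
    rwa [Matrix.IsHermitian, Matrix.conjTranspose_eq_transpose_of_trivial] at h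
  -- congruence formula for the `[Bᵀ;I]ᵀ M [Bᵀ;I]` pattern
  have hcong : ∀ B : Matrix (Fin D) (Fin n) ℝ,
      (Matrix.fromRows B (1 : Matrix (Fin n) (Fin n) ℝ))ᵀ *
        Matrix.fromBlocks Δ1 Δ2 Δ2ᵀ Δ3 *
        Matrix.fromRows B (1 : Matrix (Fin n) (Fin n) ℝ)
        = Bᵀ * Δ1 * B + Bᵀ * Δ2 + Δ2ᵀ * B + Δ3 := by
    intro B
    rw [Matrix.transpose_fromRows, Matrix.mul_assoc, Matrix.fromBlocks_mul_fromRows,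
      Matrix.fromCols_mul_fromRows]
    simp only [Matrix.mul_one, Matrix.one_mul, Matrix.transpose_one, Matrix.mul_add,
      Matrix.mul_assoc]
    abel
  -- the noise congruence matrix
  set G : Matrix (Fin n) (Fin n) ℝ :=
    Dm * Δ1 * Dmᵀ + Dm * Δ2 + Δ2ᵀ * Dmᵀ + Δ3 with hGdef
  have hGneg : IsNegDef G := by
    have h := hnoise
    rwa [hcong, Matrix.transpose_transpose] at h
  have hGsym : Gᵀ = G := by
    have h := hGneg.1
    rw [Matrix.IsHermitian, Matrix.conjTranspose_eq_transpose_of_trivial,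
      Matrix.transpose_neg] at h
    exact neg_inj.mp h
  have hGform : ∀ v : Fin n → ℝ, v ⬝ᵥ G *ᵥ v ≤ 0 := by
    intro v
    have h := hGneg.posSemidef.dotProduct_mulVec_nonneg v
    simp only [star_trivial, Matrix.neg_mulVec, dotProduct_neg] at h
    linarith
  -- `Δ3` is symmetric
  have hΔ3s : Δ3ᵀ = Δ3 := by
    have h1 : Gᵀ = Dm * Δ1 * Dmᵀ + Δ2ᵀ * Dmᵀ + Dm * Δ2 + Δ3ᵀ := by
      rw [hGdef]
      simp only [Matrix.transpose_add, Matrix.transpose_mul, Matrix.transpose_transpose,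
        hΔ1s, Matrix.mul_assoc]
    have h2 : Δ3ᵀ - Δ3 =
        (Dm * Δ1 * Dmᵀ + Δ2ᵀ * Dmᵀ + Dm * Δ2 + Δ3ᵀ) -
          (Dm * Δ1 * Dmᵀ + Dm * Δ2 + Δ2ᵀ * Dmᵀ + Δ3) := by abel
    rw [← h1, ← hGdef, hGsym, sub_self] at h2
    exact sub_eq_zero.mp h2
  -- data matrices: `Δt3` expanded, symmetry of `Δt1`, `Δt3`
  have hΔt3' : Δt3 = Xp * Δ1 * Xpᵀ + Xp * Δ2 + Δ2ᵀ * Xpᵀ + Δ3 := by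
    rw [hΔt3, hcong, Matrix.transpose_transpose]
  have hΔt1s : Δt1ᵀ = Δt1 := by
    rw [hΔt1]
    simp only [Matrix.transpose_mul, Matrix.transpose_transpose, hΔ1s, Matrix.mul_assoc]
  have hΔt3s : Δt3ᵀ = Δt3 := by
    rw [hΔt3']
    simp only [Matrix.transpose_add, Matrix.transpose_mul, Matrix.transpose_transpose,
      hΔ1s, hΔ3s, Matrix.mul_assoc]
    abel
  -- the matrix `N` and its symmetry
  set N : Matrix (Fin ℓ ⊕ Fin n) (Fin ℓ ⊕ Fin n) ℝ :=
    Matrix.fromBlocks (-Δt1) Δt2 Δt2ᵀ (-Δt3) with hNdef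
  have hNs : Nᵀ = N := by
    rw [hNdef, Matrix.fromBlocks_transpose]
    simp only [Matrix.transpose_neg, Matrix.transpose_transpose, hΔt1s, hΔt3s]
  -- noise matrix from data
  have hDm : Dm = Xp - Agt * Zt := by
    ext k i
    have h := congrFun (hdata i) k
    have h2 : (Agt * Zt) k i = (Agt *ᵥ zval (xd i) (ud i)) k := by
      simp [Matrix.mul_apply, Matrix.mulVec, dotProduct, hZt]
    simp only [Matrix.sub_apply, hXp, h, h2, Pi.add_apply]
    ring
  -- key matrix identity
  have hkey : G = Agt * Δt1 * Agtᵀ + Agt * Δt2 + Δt2ᵀ * Agtᵀ + Δt3 := by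
    rw [hGdef, hDm, hΔt1, hΔt2, hΔt3']
    simp only [Matrix.transpose_sub, Matrix.transpose_mul, Matrix.transpose_neg,
      Matrix.transpose_add, Matrix.transpose_transpose, Matrix.sub_mul, Matrix.mul_sub,
      Matrix.mul_add, Matrix.add_mul, Matrix.neg_mul, Matrix.mul_neg, hΔ1s, Matrix.mul_assoc]
    abel
  -- quadratic form of `N` on block vectors
  have hquad : ∀ (a : Fin ℓ → ℝ) (b : Fin n → ℝ),
      Sum.elim a b ⬝ᵥ N *ᵥ Sum.elim a b
        = -(a ⬝ᵥ Δt1 *ᵥ a) + a ⬝ᵥ Δt2 *ᵥ b + b ⬝ᵥ Δt2ᵀ *ᵥ a - b ⬝ᵥ Δt3 *ᵥ b := by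
    intro a b
    rw [hNdef, Matrix.fromBlocks_mulVec, sumElim_dotProduct_sumElim]
    simp only [Sum.elim_comp_inl, Sum.elim_comp_inr, Matrix.neg_mulVec, dotProduct_add,
      dotProduct_neg]
    ring
  -- quadratic form of `G`
  have hGquad : ∀ η : Fin n → ℝ, η ⬝ᵥ G *ᵥ η
      = (Agtᵀ *ᵥ η) ⬝ᵥ Δt1 *ᵥ (Agtᵀ *ᵥ η) + (Agtᵀ *ᵥ η) ⬝ᵥ Δt2 *ᵥ η
        + η ⬝ᵥ Δt2ᵀ *ᵥ (Agtᵀ *ᵥ η) + η ⬝ᵥ Δt3 *ᵥ η := by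
    intro η
    rw [hkey]
    simp only [Matrix.add_mulVec, dotProduct_add, ← Matrix.mulVec_mulVec]
    rw [dotmv Agt η (Δt1 *ᵥ (Agtᵀ *ᵥ η)), dotmv Agt η (Δt2 *ᵥ η)]
  -- the negative subspace fact:  u₀ᵀ N u₀ = -(ηᵀ G η) ≥ 0
  have hU : ∀ η : Fin n → ℝ,
      Sum.elim (-(Agtᵀ *ᵥ η)) η ⬝ᵥ N *ᵥ Sum.elim (-(Agtᵀ *ᵥ η)) η = -(η ⬝ᵥ G *ᵥ η) := by
    intro η
    rw [hquad, hGquad]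
    simp only [Matrix.mulVec_neg, dotProduct_neg, neg_dotProduct]
    ring
  -- the nonnegative subspace fact
  have hV : ∀ a : Fin ℓ → ℝ,
      Sum.elim a (0 : Fin n → ℝ) ⬝ᵥ N *ᵥ Sum.elim a (0 : Fin n → ℝ) ≤ 0 := by
    intro a
    rw [hquad]
    have h1 : a ⬝ᵥ Δt1 *ᵥ a = (Ztᵀ *ᵥ a) ⬝ᵥ Δ1 *ᵥ (Ztᵀ *ᵥ a) := by
      rw [hΔt1]
      simp only [← Matrix.mulVec_mulVec]
      rw [dotmv Zt a (Δ1 *ᵥ (Ztᵀ *ᵥ a))]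
    have h2 : 0 ≤ (Ztᵀ *ᵥ a) ⬝ᵥ Δ1 *ᵥ (Ztᵀ *ᵥ a) := by
      have h := hΔ1.dotProduct_mulVec_nonneg (Ztᵀ *ᵥ a)
      simpa using h
    simp only [Matrix.mulVec_zero, dotProduct_zero, zero_dotProduct]
    linarith [h1 ▸ h2]
  -- the central inequality: the `Δbar` quadratic form at `((zval x u), Agt (zval x u))` is ≤ 0
  have hbar : Sum.elim (zval x u) (Agt *ᵥ (zval x u)) ⬝ᵥ
      (Matrix.fromBlocks Δb1 Δb2 Δb2ᵀ Δb3) *ᵥ Sum.elim (zval x u) (Agt *ᵥ (zval x u)) ≤ 0 := by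
    set w : Fin ℓ ⊕ Fin n → ℝ := Sum.elim (zval x u) (Agt *ᵥ (zval x u)) with hw
    set y : Fin ℓ ⊕ Fin n → ℝ := (Matrix.fromBlocks Δb1 Δb2 Δb2ᵀ Δb3) *ᵥ w with hy
    have hNy : N *ᵥ y = w := by
      rw [hy, Matrix.mulVec_mulVec, hNinv, Matrix.one_mulVec]
    set y1 : Fin ℓ → ℝ := y ∘ Sum.inl with hy1
    set y2 : Fin n → ℝ := y ∘ Sum.inr with hy2
    set u0 : Fin ℓ ⊕ Fin n → ℝ := Sum.elim (-(Agtᵀ *ᵥ y2)) y2 with hu0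
    set v0 : Fin ℓ ⊕ Fin n → ℝ := Sum.elim (y1 + Agtᵀ *ᵥ y2) (0 : Fin n → ℝ) with hv0
    have hsplit : y = u0 + v0 := by
      funext i
      cases i with
      | inl i => simp [hu0, hv0, hy1]
      | inr i => simp [hu0, hv0, hy2]
    have horth : w ⬝ᵥ u0 = 0 := by
      rw [hw, hu0, sumElim_dotProduct_sumElim]
      have : (Agt *ᵥ (zval x u)) ⬝ᵥ y2 = (zval x u) ⬝ᵥ (Agtᵀ *ᵥ y2) := by
        rw [dotProduct_comm, dotmv Agt y2 (zval x u), dotProduct_comm]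
      rw [this]
      simp [dotProduct_neg]
    -- symmetry-based exchange
    have hexch : (N *ᵥ u0) ⬝ᵥ v0 = (N *ᵥ v0) ⬝ᵥ u0 := by
      rw [dotProduct_comm, dotmv N v0 u0, hNs]
    have hzero : (N *ᵥ u0) ⬝ᵥ u0 + (N *ᵥ v0) ⬝ᵥ u0 = 0 := by
      have : w ⬝ᵥ u0 = (N *ᵥ u0) ⬝ᵥ u0 + (N *ᵥ v0) ⬝ᵥ u0 := by
        rw [← hNy, hsplit, Matrix.mulVec_add, add_dotProduct]
      linarith [horth, this]
    have hq : w ⬝ᵥ y = (N *ᵥ u0) ⬝ᵥ v0 + (N *ᵥ v0) ⬝ᵥ v0 := by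
      have h1 : w ⬝ᵥ y = w ⬝ᵥ u0 + w ⬝ᵥ v0 := by
        rw [hsplit, dotProduct_add]
      have h2 : w ⬝ᵥ v0 = (N *ᵥ u0) ⬝ᵥ v0 + (N *ᵥ v0) ⬝ᵥ v0 := by
        rw [← hNy, hsplit, Matrix.mulVec_add, add_dotProduct]
      rw [h1, horth, h2]; ring
    have hu0q : 0 ≤ (N *ᵥ u0) ⬝ᵥ u0 := by
      have h := hU y2
      rw [dotProduct_comm]
      rw [hu0]
      rw [show Sum.elim (-(Agtᵀ *ᵥ y2)) y2 ⬝ᵥ N *ᵥ Sum.elim (-(Agtᵀ *ᵥ y2)) y2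
        = -(y2 ⬝ᵥ G *ᵥ y2) from h]
      linarith [hGform y2]
    have hv0q : (N *ᵥ v0) ⬝ᵥ v0 ≤ 0 := by
      have h := hV (y1 + Agtᵀ *ᵥ y2)
      rw [dotProduct_comm]
      exact h
    have : w ⬝ᵥ y ≤ 0 := by
      rw [hq, hexch]
      linarith
    exact this
  -- the SOS multiplier term is ≤ 0
  have hptterm : Sum.elim (zval x u) (fun _ => (1 : ℝ)) ⬝ᵥ
      (∑ j, Pt j) *ᵥ Sum.elim (zval x u) (fun _ => (1 : ℝ)) ≤ 0 := by
    rw [sum_mulVec', dot_sum']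
    apply Finset.sum_nonpos
    intro j _
    have hσ : 0 ≤ ∑ b, MvPolynomial.eval (Fin.append x u) (zrow j b) * τc j b := by
      obtain ⟨k, q, hq⟩ := hsos j
      have h := congrArg (MvPolynomial.eval (Fin.append x u)) hq
      simp only [map_sum, _root_.map_mul, MvPolynomial.eval_C, map_pow] at h
      have h2 : ∑ b, MvPolynomial.eval (Fin.append x u) (zrow j b) * τc j b
          = ∑ i, (MvPolynomial.eval (Fin.append x u) (q i)) ^ 2 := by
        rw [← h]
        exact Finset.sum_congr rfl fun b _ => mul_comm _ _
      rw [h2]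
      exact Finset.sum_nonneg fun i _ => sq_nonneg _
    have h3 := hPt j x u
    rw [← h3]
    exact mul_nonpos_of_nonneg_of_nonpos hσ (hp j)
  -- assemble everything via the PSD matrix `Θ`
  have hΘ2 := hΘ.dotProduct_mulVec_nonneg (Sum.elim (f x u) (Sum.elim (zval x u) (fun _ => (1 : ℝ))))
  rw [star_trivial, hΘform (f x u) (zval x u) 1] at hΘ2
  rw [← hTx x u, ← hT x u] at hΘ2
  have hτbar : τ * (Sum.elim (zval x u) (f x u) ⬝ᵥ
      (Matrix.fromBlocks Δb1 Δb2 Δb2ᵀ Δb3) *ᵥ Sum.elim (zval x u) (f x u)) ≤ 0 := by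
    rw [hf x u]
    exact mul_nonpos_of_nonneg_of_nonpos hτ hbar
  linarith [hΘ2, hτbar, hptterm]
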